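/- Let (Ω, Σ, μ) be a finite measure space and X a Banach space such that (i) every RL-integrable function from Ω to X has a Bochner-integrable equivalent, and (ii) there is a countable family {x_n*} of continuous linear functionals on X separating the points of X (i.e., if x_n*(x) = 0 for all n then x = 0). Then every RL-integrable function f : Ω → X is Bochner-integrable. -/

import Mathlib

open MeasureTheory Set Pointwise

/-- A countable partition of `A` into pairwise disjoint measurable pieces
(possibly empty, so that finite partitions are included). -/
def IsRLPartition {Ω : Type*} [MeasurableSpace Ω] (A : Set Ω) (P : ℕ → Set Ω) : Prop :=
  (∀ i, MeasurableSet (P i)) ∧ Pairwise (Function.onFun Disjoint P) ∧ (⋃ i, P i) = A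

/-- `Γ` is finer than (inscribed into) `P`: every piece of `Γ` is contained in a piece of `P`. -/
def IsFinerPartition {Ω : Type*} (Γ P : ℕ → Set Ω) : Prop :=
  ∀ j, ∃ i, Γ j ⊆ P i

/-- `T` is a choice of sampling points for the partition `P`. -/
def IsSampling {Ω : Type*} (P : ℕ → Set Ω) (T : ℕ → Ω) : Prop :=
  ∀ i, (P i).Nonempty → T i ∈ P i

/-- The RL integral sum `S(f, P, T) = ∑ᵢ μ(Pᵢ) • f(Tᵢ)`. -/
noncomputable def RLSum {Ω X : Type*} [MeasurableSpace Ω] [NormedAddCommGroup X]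
    [NormedSpace ℝ X] (μ : Measure Ω) (f : Ω → X) (P : ℕ → Set Ω) (T : ℕ → Ω) : X :=
  ∑' i, (μ (P i)).toReal • f (T i)

/-- Absolute convergence of the RL integral sum. -/
def RLSumAbsConv {Ω X : Type*} [MeasurableSpace Ω] [NormedAddCommGroup X]
    (μ : Measure Ω) (f : Ω → X) (P : ℕ → Set Ω) (T : ℕ → Ω) : Prop :=
  Summable fun i => (μ (P i)).toReal * ‖f (T i)‖

/-- `f` is RL-integrable over `A` with RL integral `x`. -/
def HasRLIntegral {Ω X : Type*} [MeasurableSpace Ω] [NormedAddCommGroup X] [NormedSpace ℝ X]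
    (μ : Measure Ω) (f : Ω → X) (A : Set Ω) (x : X) : Prop :=
  ∀ ε > 0, ∃ P : ℕ → Set Ω, IsRLPartition A P ∧
    ∀ Γ : ℕ → Set Ω, IsRLPartition A Γ → IsFinerPartition Γ P →
      ∀ T : ℕ → Ω, IsSampling Γ T →
        RLSumAbsConv μ f Γ T ∧ ‖RLSum μ f Γ T - x‖ < ε

/-- `f` has a Lebesgue-integrable majorant, i.e. `f ∈ L̄₁(Ω, Σ, μ, X)`. -/
def HasIntegrableMajorant {Ω X : Type*} [MeasurableSpace Ω] [NormedAddCommGroup X]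
    (μ : Measure Ω) (f : Ω → X) : Prop :=
  ∃ g : Ω → ℝ, Integrable g μ ∧ ∀ t, ‖f t‖ ≤ g t

/-- The limit set `I(f)`: all limit points of the net of absolute RL integral sums. -/
def RLLimitSet {Ω X : Type*} [MeasurableSpace Ω] [NormedAddCommGroup X] [NormedSpace ℝ X]
    (μ : Measure Ω) (f : Ω → X) : Set X :=
  {x | ∀ ε > 0, ∀ P : ℕ → Set Ω, IsRLPartition Set.univ P →
    ∃ Γ : ℕ → Set Ω, IsRLPartition Set.univ Γ ∧ IsFinerPartition Γ P ∧
      ∃ T : ℕ → Ω, IsSampling Γ T ∧ RLSumAbsConv μ f Γ T ∧ ‖RLSum μ f Γ T - x‖ < ε}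

/-- `g` is a Bochner-integrable equivalent of `f`: `g` is Bochner integrable and the
RL integral of `f` over every measurable set equals the Bochner integral of `g` over it. -/
def BochnerEquivalent {Ω X : Type*} [MeasurableSpace Ω] [NormedAddCommGroup X] [NormedSpace ℝ X]
    (μ : Measure Ω) (f g : Ω → X) : Prop :=
  Integrable g μ ∧ ∀ A : Set Ω, MeasurableSet A → HasRLIntegral μ f A (∫ ω in A, g ω ∂μ)

/-- `f : [0,1] → X` is Riemann integrable with Riemann integral `x`. -/
def HasRiemannIntegral {X : Type*} [NormedAddCommGroup X] [NormedSpace ℝ X]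
    (f : ℝ → X) (x : X) : Prop :=
  ∀ ε > 0, ∃ δ > 0, ∀ (n : ℕ) (a : ℕ → ℝ) (t : ℕ → ℝ),
    a 0 = 0 → a n = 1 → (∀ i < n, a i ≤ a (i + 1)) →
    (∀ i < n, a (i + 1) - a i < δ) →
    (∀ i < n, t i ∈ Set.Icc (a i) (a (i + 1))) →
    ‖(∑ i ∈ Finset.range n, (a (i + 1) - a i) • f (t i)) - x‖ < ε

section Helpers

variable {Ω : Type*} [MeasurableSpace Ω] {μ : Measure Ω}

private lemma tsum_sum_split {α β : Type*} {F : α ⊕ β → ℝ} (h : Summable F) :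
    ∑' y, F y = (∑' a, F (.inl a)) + ∑' b, F (.inr b) := by
  classical
  have h1 : Summable ((Set.range (Sum.inl : α → α ⊕ β)).indicator F) := h.indicator _
  have h2 : Summable ((Set.range (Sum.inr : β → α ⊕ β)).indicator F) := h.indicator _
  have hFeq : ∀ y, F y = (Set.range (Sum.inl : α → α ⊕ β)).indicator F y
      + (Set.range (Sum.inr : β → α ⊕ β)).indicator F y := by
    intro y
    cases y with
    | inl a => simp [Set.indicator_apply]
    | inr b => simp [Set.indicator_apply]
  have e1 : ∑' y, ((Set.range (Sum.inl : α → α ⊕ β)).indicator F) y = ∑' a, F (.inl a) := by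
    rw [← Sum.inl_injective.tsum_eq (f := (Set.range (Sum.inl : α → α ⊕ β)).indicator F)
      (Set.support_indicator_subset)]
    exact tsum_congr fun a => Set.indicator_of_mem (Set.mem_range_self a) F
  have e2 : ∑' y, ((Set.range (Sum.inr : β → α ⊕ β)).indicator F) y = ∑' b, F (.inr b) := by
    rw [← Sum.inr_injective.tsum_eq (f := (Set.range (Sum.inr : β → α ⊕ β)).indicator F)
      (Set.support_indicator_subset)]
    exact tsum_congr fun b => Set.indicator_of_mem (Set.mem_range_self b) F
  calc ∑' y, F y = ∑' y, ((Set.range (Sum.inl : α → α ⊕ β)).indicator F y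
        + (Set.range (Sum.inr : β → α ⊕ β)).indicator F y) := tsum_congr hFeq
    _ = _ := by rw [Summable.tsum_add h1 h2, e1, e2]

private lemma absconv_summable {X : Type*} [NormedAddCommGroup X] [NormedSpace ℝ X]
    [CompleteSpace X] {f : Ω → X} {Γ : ℕ → Set Ω} {T : ℕ → Ω} (h : RLSumAbsConv μ f Γ T) :
    Summable fun i => (μ (Γ i)).toReal • f (T i) := by
  refine Summable.of_norm ?_
  simpa [RLSumAbsConv, norm_smul, Real.norm_eq_abs, abs_of_nonneg ENNReal.toReal_nonneg] using h

private lemma HasRLIntegral.clm_comp {X : Type*} [NormedAddCommGroup X] [NormedSpace ℝ X]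
    [CompleteSpace X] (φ : X →L[ℝ] ℝ) {f : Ω → X} {A : Set Ω} {x : X}
    (h : HasRLIntegral μ f A x) : HasRLIntegral μ (fun ω => φ (f ω)) A (φ x) := by
  intro ε hε
  obtain ⟨P, hP, hP2⟩ := h (ε / (‖φ‖ + 1)) (by positivity)
  refine ⟨P, hP, fun Γ hΓ hΓP T hT => ?_⟩
  obtain ⟨habs, hlt⟩ := hP2 Γ hΓ hΓP T hT
  have hsum := absconv_summable habs
  have habs' : RLSumAbsConv μ (fun ω => φ (f ω)) Γ T := by
    refine Summable.of_nonneg_of_le (fun i => by positivity) (fun i => ?_) (habs.mul_left ‖φ‖)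
    calc (μ (Γ i)).toReal * ‖φ (f (T i))‖ ≤ (μ (Γ i)).toReal * (‖φ‖ * ‖f (T i)‖) := by
          gcongr
          exact φ.le_opNorm _
      _ = ‖φ‖ * ((μ (Γ i)).toReal * ‖f (T i)‖) := by ring
  refine ⟨habs', ?_⟩
  have hmap : RLSum μ (fun ω => φ (f ω)) Γ T = φ (RLSum μ f Γ T) := by
    calc RLSum μ (fun ω => φ (f ω)) Γ T = ∑' i, φ ((μ (Γ i)).toReal • f (T i)) := by
          refine tsum_congr fun i => ?_
          simp [RLSum, φ.map_smul]
      _ = φ (RLSum μ f Γ T) := (φ.map_tsum hsum).symm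
  rw [hmap, ← map_sub]
  calc ‖φ (RLSum μ f Γ T - x)‖ ≤ ‖φ‖ * ‖RLSum μ f Γ T - x‖ := φ.le_opNorm _
    _ ≤ ‖φ‖ * (ε / (‖φ‖ + 1)) := by gcongr
    _ < (‖φ‖ + 1) * (ε / (‖φ‖ + 1)) := by
        have : 0 < ε / (‖φ‖ + 1) := by positivity
        nlinarith
    _ = ε := by field_simp

private lemma exists_common_refinement {P Q : ℕ → Set Ω}
    (hP : IsRLPartition (Set.univ : Set Ω) P) (hQ : IsRLPartition Set.univ Q) :
    ∃ R, IsRLPartition (Set.univ : Set Ω) R ∧ IsFinerPartition R P ∧ IsFinerPartition R Q := by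
  classical
  let e : ℕ ≃ ℕ × ℕ := (Denumerable.eqv (ℕ × ℕ)).symm
  refine ⟨fun k => P (e k).1 ∩ Q (e k).2, ⟨fun k => (hP.1 _).inter (hQ.1 _), ?_, ?_⟩,
    fun k => ⟨(e k).1, Set.inter_subset_left⟩, fun k => ⟨(e k).2, Set.inter_subset_right⟩⟩
  · intro k k' hkk'
    have he : e k ≠ e k' := fun h => hkk' (e.injective h)
    by_cases h1 : (e k).1 = (e k').1
    · have h2 : (e k).2 ≠ (e k').2 := fun h2 => he (Prod.ext h1 h2)
      exact (hQ.2.1 h2).mono Set.inter_subset_right Set.inter_subset_right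
    · exact (hP.2.1 h1).mono Set.inter_subset_left Set.inter_subset_left
  · apply Set.eq_univ_of_forall
    intro t
    have ht1 : t ∈ ⋃ i, P i := by rw [hP.2.2]; trivial
    have ht2 : t ∈ ⋃ j, Q j := by rw [hQ.2.2]; trivial
    obtain ⟨i, hi⟩ := Set.mem_iUnion.mp ht1
    obtain ⟨j, hj⟩ := Set.mem_iUnion.mp ht2
    exact Set.mem_iUnion.mpr ⟨e.symm (i, j), by rw [Equiv.apply_symm_apply]; exact ⟨hi, hj⟩⟩

private lemma level_partition (v : Ω → ℝ) (hmv : Measurable v) {ε : ℝ} (hε : 0 < ε) :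
    ∃ L : ℕ → Set Ω, IsRLPartition (Set.univ : Set Ω) L ∧
      ∀ i, ∀ s ∈ L i, ∀ t ∈ L i, |v s - v t| ≤ ε := by
  classical
  let e : ℕ ≃ ℤ := (Denumerable.eqv ℤ).symm
  refine ⟨fun n => v ⁻¹' Set.Ico ((e n : ℝ) * ε) (((e n : ℝ) + 1) * ε),
    ⟨fun n => hmv measurableSet_Ico, ?_, ?_⟩, ?_⟩
  · intro n m hnm
    have hne : e n ≠ e m := fun h => hnm (e.injective h)
    apply Disjoint.preimage
    have key : ∀ a b : ℤ, a < b →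
        Disjoint (Set.Ico ((a : ℝ) * ε) (((a : ℝ) + 1) * ε))
          (Set.Ico ((b : ℝ) * ε) (((b : ℝ) + 1) * ε)) := by
      intro a b hab
      rw [Set.disjoint_left]
      rintro x ⟨_, hx2⟩ ⟨hx3, _⟩
      have h1 : (a : ℝ) + 1 ≤ (b : ℝ) := by
        have := Int.add_one_le_iff.mpr hab
        exact_mod_cast this
      have : ((a : ℝ) + 1) * ε ≤ (b : ℝ) * ε := by
        apply mul_le_mul_of_nonneg_right h1 hε.le
      linarith
    rcases lt_or_gt_of_ne hne with h | h
    · exact key _ _ h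
    · exact (key _ _ h).symm
  · apply Set.eq_univ_of_forall
    intro t
    set k : ℤ := ⌊v t / ε⌋ with hk
    have h1 : (k : ℝ) ≤ v t / ε := Int.floor_le _
    have h2 : v t / ε < (k : ℝ) + 1 := Int.lt_floor_add_one _
    refine Set.mem_iUnion.mpr ⟨e.symm k, ?_⟩
    simp only [Set.mem_preimage, Set.mem_Ico, Equiv.apply_symm_apply]
    constructor
    · rw [← le_div_iff₀ hε]; exact h1
    · rw [← div_lt_iff₀ hε]; exact h2
  · intro i s hs t ht
    simp only [Set.mem_preimage, Set.mem_Ico] at hs ht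
    rw [abs_sub_le_iff]
    constructor <;> nlinarith [hs.1, hs.2, ht.1, ht.2]

private lemma osc_bound [IsFiniteMeasure μ] {v : Ω → ℝ} (hv : Integrable v μ)
    {ε : ℝ} (hε : 0 ≤ ε) {L : ℕ → Set Ω}
    (hosc : ∀ i, ∀ s ∈ L i, ∀ t ∈ L i, |v s - v t| ≤ ε)
    {Γ : ℕ → Set Ω} (hΓ : IsRLPartition (Set.univ : Set Ω) Γ) (hfin : IsFinerPartition Γ L)
    {T : ℕ → Ω} (hT : IsSampling Γ T) :
    Summable (fun i => |(μ (Γ i)).toReal * v (T i) - ∫ ω in Γ i, v ω ∂μ|) ∧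
    ∑' i, |(μ (Γ i)).toReal * v (T i) - ∫ ω in Γ i, v ω ∂μ| ≤ ε * (μ Set.univ).toReal := by
  have hμtot : ∑' i, (μ (Γ i)).toReal = (μ (Set.univ : Set Ω)).toReal := by
    rw [← hΓ.2.2, measure_iUnion hΓ.2.1 hΓ.1]
    exact (ENNReal.tsum_toReal_eq (fun i => measure_ne_top μ _)).symm
  have hμsum : Summable fun i => (μ (Γ i)).toReal := by
    refine summable_of_sum_le (c := (μ (Set.univ : Set Ω)).toReal)
      (fun i => ENNReal.toReal_nonneg) (fun F => ?_)
    have h1 : ∑ i ∈ F, (μ (Γ i)).toReal = (μ (⋃ i ∈ F, Γ i)).toReal := by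
      rw [measure_biUnion_finset (hΓ.2.1.set_pairwise _) (fun i _ => hΓ.1 i)]
      rw [ENNReal.toReal_sum (fun i _ => measure_ne_top μ _)]
    rw [h1]
    exact ENNReal.toReal_mono (measure_ne_top μ _) (measure_mono (Set.subset_univ _))
  have hpt : ∀ i, |(μ (Γ i)).toReal * v (T i) - ∫ ω in Γ i, v ω ∂μ| ≤ ε * (μ (Γ i)).toReal := by
    intro i
    rcases Set.eq_empty_or_nonempty (Γ i) with h | h
    · simp [h]
    · have hTi : T i ∈ Γ i := hT i h
      obtain ⟨j, hj⟩ := hfin i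
      have h1 : (μ (Γ i)).toReal * v (T i) = ∫ _ω in Γ i, v (T i) ∂μ := by
        rw [setIntegral_const, smul_eq_mul]; rfl
      rw [h1, ← integral_sub (integrable_const _).integrableOn hv.integrableOn]
      calc |∫ ω in Γ i, (v (T i) - v ω) ∂μ|
          ≤ ∫ ω in Γ i, |v (T i) - v ω| ∂μ := by
            simpa [Real.norm_eq_abs] using
              norm_integral_le_integral_norm (μ := μ.restrict (Γ i))
                (f := fun ω => v (T i) - v ω)
        _ ≤ ∫ _ω in Γ i, ε ∂μ := by
            refine setIntegral_mono_on ?_ (integrable_const _).integrableOn (hΓ.1 i) ?_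
            · exact (((integrable_const _).sub hv).abs).integrableOn
            · intro ω hω
              exact hosc j _ (hj hTi) _ (hj hω)
        _ = ε * (μ (Γ i)).toReal := by rw [setIntegral_const, smul_eq_mul, mul_comm]; rfl
  have hsummable : Summable (fun i => |(μ (Γ i)).toReal * v (T i) - ∫ ω in Γ i, v ω ∂μ|) :=
    Summable.of_nonneg_of_le (fun i => abs_nonneg _) hpt (hμsum.mul_left ε)
  refine ⟨hsummable, ?_⟩
  calc ∑' i, |(μ (Γ i)).toReal * v (T i) - ∫ ω in Γ i, v ω ∂μ|
      ≤ ∑' i, ε * (μ (Γ i)).toReal := Summable.tsum_le_tsum hpt hsummable (hμsum.mul_left ε)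
    _ = ε * ∑' i, (μ (Γ i)).toReal := tsum_mul_left
    _ = ε * (μ (Set.univ : Set Ω)).toReal := by rw [hμtot]

private lemma key_saks [IsFiniteMeasure μ] {u v : Ω → ℝ}
    (hv : Integrable v μ)
    (hu : ∀ A : Set Ω, MeasurableSet A → HasRLIntegral μ u A (∫ ω in A, v ω ∂μ))
    {ε : ℝ} (hε : 0 < ε) :
    ∃ P : ℕ → Set Ω, IsRLPartition Set.univ P ∧
      ∀ Γ : ℕ → Set Ω, IsRLPartition Set.univ Γ → IsFinerPartition Γ P →
        ∀ T : ℕ → Ω, IsSampling Γ T →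
          Summable (fun i => |(μ (Γ i)).toReal * u (T i) - ∫ ω in Γ i, v ω ∂μ|) ∧
          ∑' i, |(μ (Γ i)).toReal * u (T i) - ∫ ω in Γ i, v ω ∂μ| ≤ 6 * ε := by
  classical
  obtain ⟨P, hP, hPprop⟩ := hu Set.univ MeasurableSet.univ ε hε
  refine ⟨P, hP, fun Γ hΓ hΓP T hT => ?_⟩
  obtain ⟨habsΓ, hΓlt⟩ := hPprop Γ hΓ hΓP T hT
  set x : ℝ := ∫ ω in Set.univ, v ω ∂μ with hx
  set b : ℕ → ℝ := fun i => (μ (Γ i)).toReal * u (T i) - ∫ ω in Γ i, v ω ∂μ with hb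
  have habs' : Summable fun i => (μ (Γ i)).toReal * |u (T i)| := by
    simpa [RLSumAbsConv, Real.norm_eq_abs] using habsΓ
  -- summability of |b|
  have hsum_int : Summable fun i => ∫ ω in Γ i, |v ω| ∂μ := by
    refine summable_of_sum_le (c := ∫ ω, |v ω| ∂μ)
      (fun i => integral_nonneg fun ω => abs_nonneg _) (fun F => ?_)
    rw [← integral_biUnion_finset F (fun i _ => hΓ.1 i) (hΓ.2.1.set_pairwise _)
      (fun i _ => hv.abs.integrableOn)]
    exact setIntegral_le_integral hv.abs (Filter.Eventually.of_forall fun ω => abs_nonneg _)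
  have hbsumm : Summable fun i => |b i| := by
    refine Summable.of_nonneg_of_le (fun i => abs_nonneg _) (fun i => ?_) (habs'.add hsum_int)
    calc |b i| ≤ |(μ (Γ i)).toReal * u (T i)| + |∫ ω in Γ i, v ω ∂μ| := abs_sub _ _
      _ ≤ (μ (Γ i)).toReal * |u (T i)| + ∫ ω in Γ i, |v ω| ∂μ := by
          gcongr
          · rw [abs_mul, abs_of_nonneg ENNReal.toReal_nonneg]
          · simpa [Real.norm_eq_abs] using
              norm_integral_le_integral_norm (μ := μ.restrict (Γ i)) (f := v)
  -- the main finite-sum claim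
  have hclaim : ∀ G : Finset ℕ, |∑ i ∈ G, b i| ≤ 3 * ε := by
    intro G
    set B : Set Ω := ⋃ i ∈ G, Γ i with hBdef
    have hBmeas : MeasurableSet B := G.measurableSet_biUnion (fun i _ => hΓ.1 i)
    obtain ⟨Q, hQ, hQprop⟩ := hu B hBmeas ε hε
    have hΓB : ∀ i ∈ G, Γ i ⊆ B := fun i hi => Set.subset_biUnion_of_mem hi
    have hQB : ⋃ j, Q j = B := hQ.2.2
    set s : ℕ × ℕ → Ω := fun p =>
      if h : (Γ p.1 ∩ Q p.2).Nonempty then h.choose else T p.1 with hs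
    set G1 : ℕ ⊕ ℕ × ℕ → Set Ω := Sum.elim (fun i => if i ∈ G then (∅ : Set Ω) else Γ i)
      (fun p => if p.1 ∈ G then Γ p.1 ∩ Q p.2 else ∅) with hG1
    set S1 : ℕ ⊕ ℕ × ℕ → Ω := Sum.elim T s with hS1
    let E : ℕ ≃ ℕ ⊕ ℕ × ℕ := (Denumerable.eqv (ℕ ⊕ ℕ × ℕ)).symm
    -- pairwise disjointness of G1
    have hΓdisj : ∀ {i i' : ℕ}, i ≠ i' → Disjoint (Γ i) (Γ i') := fun h => hΓ.2.1 h
    have hQdisj : ∀ {j j' : ℕ}, j ≠ j' → Disjoint (Q j) (Q j') := fun h => hQ.2.1 h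
    have hG1disj : ∀ y y' : ℕ ⊕ ℕ × ℕ, y ≠ y' → Disjoint (G1 y) (G1 y') := by
      rintro (i | ⟨i, j⟩) (i' | ⟨i', j'⟩) hne
      · have hii : i ≠ i' := fun h => hne (by rw [h])
        by_cases hi : i ∈ G
        · simp [hG1, hi]
        · by_cases hi' : i' ∈ G
          · simp [hG1, hi']
          · simpa [hG1, hi, hi'] using hΓdisj hii
      · by_cases hi : i ∈ G
        · simp [hG1, hi]
        · by_cases hi' : i' ∈ G
          · have hii : i ≠ i' := fun h => hi (h ▸ hi')
            simpa [hG1, hi, hi'] using (hΓdisj hii).mono_right Set.inter_subset_left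
          · simp [hG1, hi']
      · by_cases hi' : i' ∈ G
        · simp [hG1, hi']
        · by_cases hi : i ∈ G
          · have hii : i ≠ i' := fun h => hi' (h ▸ hi)
            simpa [hG1, hi, hi'] using (hΓdisj hii).mono_left Set.inter_subset_left
          · simp [hG1, hi]
      · by_cases hii : i = i'
        · subst hii
          have hjj : j ≠ j' := fun h => hne (by rw [h])
          by_cases hi : i ∈ G
          · simpa [hG1, hi] using
              (hQdisj hjj).mono Set.inter_subset_right Set.inter_subset_right
          · simp [hG1, hi]
        · by_cases hi : i ∈ G
          · by_cases hi' : i' ∈ G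
            · simpa [hG1, hi, hi'] using
                (hΓdisj hii).mono Set.inter_subset_left Set.inter_subset_left
            · simp [hG1, hi']
          · simp [hG1, hi]
    -- Γ' := G1 ∘ E is a partition of univ
    have hΓ' : IsRLPartition (Set.univ : Set Ω) (G1 ∘ E) := by
      refine ⟨?_, ?_, ?_⟩
      · intro k
        rcases hEk : E k with i | ⟨i, j⟩ <;>
          simp only [Function.comp_apply, hEk, hG1, Sum.elim_inl, Sum.elim_inr] <;>
          split_ifs
        · exact MeasurableSet.empty
        · exact hΓ.1 _
        · exact (hΓ.1 _).inter (hQ.1 _)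
        · exact MeasurableSet.empty
      · intro k k' hkk'
        exact hG1disj _ _ (fun h => hkk' (E.injective h))
      · have h0 : ⋃ k, (G1 ∘ E) k = ⋃ y, G1 y := E.surjective.iUnion_comp _
        rw [h0]
        apply Set.eq_univ_of_forall
        intro t
        have ht : t ∈ ⋃ i, Γ i := by rw [hΓ.2.2]; trivial
        obtain ⟨i, hi⟩ := Set.mem_iUnion.mp ht
        by_cases hiG : i ∈ G
        · have htB : t ∈ B := hΓB i hiG hi
          rw [← hQB] at htB
          obtain ⟨j, hj⟩ := Set.mem_iUnion.mp htB
          exact Set.mem_iUnion.mpr ⟨Sum.inr (i, j), by simp [hG1, hiG, hi, hj]⟩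
        · exact Set.mem_iUnion.mpr ⟨Sum.inl i, by simp [hG1, hiG, hi]⟩
    have hfiner : IsFinerPartition (G1 ∘ E) P := by
      have hsub : ∀ y, ∃ m, G1 y ⊆ P m := by
        rintro (i | ⟨i, j⟩)
        · by_cases h : i ∈ G
          · exact ⟨0, by simp [hG1, h]⟩
          · obtain ⟨m, hm⟩ := hΓP i
            exact ⟨m, by simpa [hG1, h] using hm⟩
        · by_cases h : i ∈ G
          · obtain ⟨m, hm⟩ := hΓP i
            refine ⟨m, ?_⟩
            simp only [hG1, Sum.elim_inr, if_pos h]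
            exact Set.inter_subset_left.trans hm
          · exact ⟨0, by simp [hG1, h]⟩
      intro k
      exact hsub (E k)
    have hsampling : IsSampling (G1 ∘ E) (S1 ∘ E) := by
      intro k hk
      rcases hEk : E k with i | ⟨i, j⟩ <;>
        simp only [Function.comp_apply, hEk, hG1, hS1, Sum.elim_inl, Sum.elim_inr] at hk ⊢
      · split_ifs at hk ⊢ with h
        · exact absurd hk Set.not_nonempty_empty
        · exact hT i hk
      · split_ifs at hk ⊢ with h
        · simp only [hs]
          rw [dif_pos hk]
          exact hk.choose_spec
        · exact absurd hk Set.not_nonempty_empty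
    obtain ⟨habsΓ', hΓ'lt⟩ := hPprop _ hΓ' hfiner _ hsampling
    -- the induced partition of B
    let e2 : ℕ ≃ ℕ × ℕ := (Denumerable.eqv (ℕ × ℕ)).symm
    set ΓB : ℕ → Set Ω := fun m => G1 (Sum.inr (e2 m)) with hΓBdef
    set TB : ℕ → Ω := fun m => S1 (Sum.inr (e2 m)) with hTBdef
    have hΓBpart : IsRLPartition B ΓB := by
      refine ⟨?_, ?_, ?_⟩
      · intro m
        simp only [hΓBdef, hG1, Sum.elim_inr]
        split_ifs
        · exact (hΓ.1 _).inter (hQ.1 _)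
        · exact MeasurableSet.empty
      · intro m m' hmm'
        refine hG1disj _ _ (fun h => hmm' (e2.injective (Sum.inr_injective h)))
      · have h0 : ⋃ m, G1 (Sum.inr (e2 m)) = ⋃ p : ℕ × ℕ, G1 (Sum.inr p) :=
          e2.surjective.iUnion_comp (g := fun p => G1 (Sum.inr p))
        rw [hΓBdef, h0]
        ext t
        simp only [Set.mem_iUnion, hG1, Sum.elim_inr]
        constructor
        · rintro ⟨⟨i, j⟩, ht⟩
          by_cases h : i ∈ G
          · rw [if_pos h] at ht
            rw [← hQB]
            exact Set.mem_iUnion.mpr ⟨j, ht.2⟩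
          · rw [if_neg h] at ht
            exact absurd ht (Set.notMem_empty t)
        · intro htB
          obtain ⟨i, hiG, hi⟩ := Set.mem_iUnion₂.mp htB
          have htB' : t ∈ ⋃ j, Q j := by rw [hQB]; exact htB
          obtain ⟨j, hj⟩ := Set.mem_iUnion.mp htB'
          exact ⟨(i, j), by simp [hiG, hi, hj]⟩
      
    have hfinerQ : IsFinerPartition ΓB Q := by
      intro m
      by_cases h : (e2 m).1 ∈ G
      · refine ⟨(e2 m).2, ?_⟩
        simp only [hΓBdef, hG1, Sum.elim_inr, if_pos h]
        exact Set.inter_subset_right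
      · exact ⟨0, by simp [hΓBdef, hG1, h]⟩
    have hsamplingB : IsSampling ΓB TB := by
      intro m hm
      simp only [hΓBdef, hG1, hTBdef, hS1, Sum.elim_inr] at hm ⊢
      split_ifs at hm ⊢ with h
      · simp only [hs]
        rw [dif_pos hm]
        exact hm.choose_spec
      · exact absurd hm Set.not_nonempty_empty
    obtain ⟨habsB, hBlt⟩ := hQprop ΓB hΓBpart hfinerQ TB hsamplingB
    -- tsum bookkeeping
    set F : ℕ ⊕ ℕ × ℕ → ℝ := fun y => (μ (G1 y)).toReal • u (S1 y) with hF
    have hFsummable : Summable F := by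
      have h1 : Summable fun y => ‖F y‖ := by
        refine (E.summable_iff (f := fun y => ‖F y‖)).mp ?_
        simpa [RLSumAbsConv, hF, Function.comp_def, norm_smul, Real.norm_eq_abs,
          abs_of_nonneg ENNReal.toReal_nonneg] using habsΓ'
      exact h1.of_norm
    have hsplit : ∑' y, F y = (∑' i, F (.inl i)) + ∑' p, F (.inr p) := tsum_sum_split hFsummable
    have hEsum : RLSum μ u (G1 ∘ E) (S1 ∘ E) = ∑' y, F y := E.tsum_eq F
    have hBsum : RLSum μ u ΓB TB = ∑' p, F (.inr p) := e2.tsum_eq fun p => F (.inr p)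
    have hFinl : ∀ i, F (.inl i) = if i ∈ G then 0 else (μ (Γ i)).toReal • u (T i) := by
      intro i
      by_cases h : i ∈ G <;> simp [hF, hG1, hS1, h]
    have hsummer : Summable fun i => (μ (Γ i)).toReal • u (T i) := absconv_summable habsΓ
    have hsplit2 : RLSum μ u Γ T
        = (∑ i ∈ G, (μ (Γ i)).toReal • u (T i)) + ∑' i, F (.inl i) := by
      have h1 : Summable fun i => if i ∈ G then (μ (Γ i)).toReal • u (T i) else 0 :=
        summable_of_ne_finset_zero (s := G) (fun i hi => if_neg hi)
      have h2 : Summable fun i => F (.inl i) := hFsummable.comp_injective Sum.inl_injective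
      have h3 : (fun i => (μ (Γ i)).toReal • u (T i))
          = fun i => (if i ∈ G then (μ (Γ i)).toReal • u (T i) else 0) + F (.inl i) := by
        funext i
        by_cases h : i ∈ G <;> simp [hFinl, h]
      calc RLSum μ u Γ T = ∑' i, ((if i ∈ G then (μ (Γ i)).toReal • u (T i) else 0)
            + F (.inl i)) := by rw [RLSum, h3]
        _ = (∑' i, if i ∈ G then (μ (Γ i)).toReal • u (T i) else 0) + ∑' i, F (.inl i) :=
            Summable.tsum_add h1 h2
        _ = _ := by
            congr 1
            rw [tsum_eq_sum (s := G) (fun i hi => if_neg hi)]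
            exact Finset.sum_congr rfl fun i hi => if_pos hi
    have hint : ∫ ω in B, v ω ∂μ = ∑ i ∈ G, ∫ ω in Γ i, v ω ∂μ :=
      integral_biUnion_finset G (fun i _ => hΓ.1 i) (hΓ.2.1.set_pairwise _)
        (fun i _ => hv.integrableOn)
    have harith : ∑ i ∈ G, b i
        = (RLSum μ u Γ T - x) - (RLSum μ u (G1 ∘ E) (S1 ∘ E) - x)
          + (RLSum μ u ΓB TB - ∫ ω in B, v ω ∂μ) := by
      have e1 : RLSum μ u (G1 ∘ E) (S1 ∘ E) = (∑' i, F (.inl i)) + RLSum μ u ΓB TB := by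
        rw [hEsum, hsplit, hBsum]
      have hsumb : ∑ i ∈ G, b i
          = (∑ i ∈ G, (μ (Γ i)).toReal • u (T i)) - ∫ ω in B, v ω ∂μ := by
        rw [hint, hb, Finset.sum_sub_distrib]
        simp [smul_eq_mul]
      rw [hsumb]
      simp only [smul_eq_mul] at hsplit2 e1 ⊢
      linear_combination e1 - hsplit2
    rw [Real.norm_eq_abs] at hΓlt hΓ'lt hBlt
    have habc : ∀ p q r : ℝ, |p - q + r| ≤ |p| + |q| + |r| := by
      intro p q r
      have h1 := abs_add_le (p - q) r
      have h2 := abs_sub p q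
      linarith
    calc |∑ i ∈ G, b i| ≤ |RLSum μ u Γ T - x| + |RLSum μ u (G1 ∘ E) (S1 ∘ E) - x|
          + |RLSum μ u ΓB TB - ∫ ω in B, v ω ∂μ| := by rw [harith]; exact habc _ _ _
      _ ≤ 3 * ε := by linarith
  -- conclude the tsum bound
  refine ⟨hbsumm, ?_⟩
  refine Summable.tsum_le_of_sum_le hbsumm (fun F => ?_)
  classical
  set F1 := F.filter (fun i => 0 ≤ b i) with hF1
  set F2 := F.filter (fun i => ¬ 0 ≤ b i) with hF2
  have hsplitF : ∑ i ∈ F, |b i| = ∑ i ∈ F1, |b i| + ∑ i ∈ F2, |b i| :=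
    (Finset.sum_filter_add_sum_filter_not F _ _).symm
  have h1 : ∑ i ∈ F1, |b i| = ∑ i ∈ F1, b i :=
    Finset.sum_congr rfl fun i hi => abs_of_nonneg (Finset.mem_filter.mp hi).2
  have h2 : ∑ i ∈ F2, |b i| = -∑ i ∈ F2, b i := by
    rw [← Finset.sum_neg_distrib]
    exact Finset.sum_congr rfl fun i hi =>
      abs_of_neg (lt_of_not_ge (Finset.mem_filter.mp hi).2)
  have hc1 := hclaim F1
  have hc2 := hclaim F2
  have hle1 : ∑ i ∈ F1, b i ≤ 3 * ε := (le_abs_self _).trans hc1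
  have hle2 : -∑ i ∈ F2, b i ≤ 3 * ε := (neg_le_abs _).trans hc2
  linarith

private lemma scalar_ae_eq [IsFiniteMeasure μ] (hne : Nonempty Ω) {u v : Ω → ℝ}
    (hv : Integrable v μ) (hmv : Measurable v)
    (hu : ∀ A : Set Ω, MeasurableSet A → HasRLIntegral μ u A (∫ ω in A, v ω ∂μ)) :
    u =ᵐ[μ] v := by
  classical
  have main : ∀ c : ℝ, 0 < c → μ {t | c < |u t - v t|} = 0 := by
    intro c hc
    set E := {t | c < |u t - v t|} with hE
    have hEbound : ∀ ε : ℝ, 0 < ε → c * (μ E).toReal ≤ (6 + (μ Set.univ).toReal) * ε := by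
      intro ε hε
      obtain ⟨P, hP, hPprop⟩ := key_saks hv hu hε
      obtain ⟨L, hL, hLosc⟩ := level_partition v hmv hε
      obtain ⟨R, hR, hRP, hRL⟩ := exists_common_refinement hP hL
      set T : ℕ → Ω := fun i => if h : (R i ∩ E).Nonempty then h.choose
        else if h2 : (R i).Nonempty then h2.choose else Classical.arbitrary Ω with hTdef
      have hT : IsSampling R T := by
        intro i hi
        by_cases h : (R i ∩ E).Nonempty
        · simp only [hTdef, dif_pos h]
          exact h.choose_spec.1
        · simp only [hTdef, dif_neg h, dif_pos hi]
          exact hi.choose_spec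
      obtain ⟨hkeysum, hkeyle⟩ := hPprop R hR hRP T hT
      obtain ⟨hoscsum, hoscle⟩ := osc_bound hv hε.le hLosc hR hRL hT
      -- pointwise bound and combination
      have hptw : ∀ i, (μ (R i)).toReal * |u (T i) - v (T i)|
          ≤ |(μ (R i)).toReal * u (T i) - ∫ ω in R i, v ω ∂μ|
            + |(μ (R i)).toReal * v (T i) - ∫ ω in R i, v ω ∂μ| := by
        intro i
        have h0 : (μ (R i)).toReal * |u (T i) - v (T i)|
            = |(μ (R i)).toReal * u (T i) - (μ (R i)).toReal * v (T i)| := by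
          rw [← mul_sub, abs_mul, abs_of_nonneg ENNReal.toReal_nonneg]
        rw [h0]
        calc |(μ (R i)).toReal * u (T i) - (μ (R i)).toReal * v (T i)|
            ≤ |(μ (R i)).toReal * u (T i) - ∫ ω in R i, v ω ∂μ|
              + |(∫ ω in R i, v ω ∂μ) - (μ (R i)).toReal * v (T i)| := abs_sub_le _ _ _
          _ = _ := by rw [abs_sub_comm (∫ ω in R i, v ω ∂μ)]
      have hsummable : Summable fun i => (μ (R i)).toReal * |u (T i) - v (T i)| :=
        Summable.of_nonneg_of_le (fun i => by positivity) hptw (hkeysum.add hoscsum)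
      have hcomb : ∑' i, (μ (R i)).toReal * |u (T i) - v (T i)|
          ≤ 6 * ε + ε * (μ Set.univ).toReal := by
        calc ∑' i, (μ (R i)).toReal * |u (T i) - v (T i)|
            ≤ ∑' i, (|(μ (R i)).toReal * u (T i) - ∫ ω in R i, v ω ∂μ|
              + |(μ (R i)).toReal * v (T i) - ∫ ω in R i, v ω ∂μ|) :=
              Summable.tsum_le_tsum hptw hsummable (hkeysum.add hoscsum)
          _ = (∑' i, |(μ (R i)).toReal * u (T i) - ∫ ω in R i, v ω ∂μ|)
              + ∑' i, |(μ (R i)).toReal * v (T i) - ∫ ω in R i, v ω ∂μ| :=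
              Summable.tsum_add hkeysum hoscsum
          _ ≤ 6 * ε + ε * (μ Set.univ).toReal := add_le_add hkeyle hoscle
      -- lower bound via the exceptional set
      set I := {i : ℕ | (R i ∩ E).Nonempty} with hI
      have hTE : ∀ i ∈ I, T i ∈ E := by
        intro i hi
        have hi' : (R i ∩ E).Nonempty := hi
        simp only [hTdef]
        rw [dif_pos hi']
        exact hi'.choose_spec.2
      have hEsub : E ⊆ ⋃ i ∈ I, R i := by
        intro t ht
        have h1 : t ∈ ⋃ i, R i := by rw [hR.2.2]; trivial
        obtain ⟨i, hi⟩ := Set.mem_iUnion.mp h1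
        exact Set.mem_biUnion (show i ∈ I from ⟨t, hi, ht⟩) hi
      have hdisjI : Pairwise (Function.onFun Disjoint fun i : I => R (i : ℕ)) := by
        intro i j hij
        exact hR.2.1 (show (i : ℕ) ≠ (j : ℕ) from fun h => hij (Subtype.coe_injective h))
      have hfin : ∑' i : I, μ (R (i : ℕ)) ≠ ⊤ := by
        rw [← measure_iUnion hdisjI (fun i => hR.1 _)]
        exact measure_ne_top μ _
      have h1 : (μ E).toReal ≤ ∑' i : I, (μ (R (i : ℕ))).toReal := by
        have hle : μ E ≤ ∑' i : I, μ (R (i : ℕ)) := by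
          calc μ E ≤ μ (⋃ i ∈ I, R i) := measure_mono hEsub
            _ = μ (⋃ i : I, R (i : ℕ)) := by rw [Set.biUnion_eq_iUnion]
            _ ≤ ∑' i : I, μ (R (i : ℕ)) := measure_iUnion_le _
        calc (μ E).toReal ≤ (∑' i : I, μ (R (i : ℕ))).toReal := ENNReal.toReal_mono hfin hle
          _ = ∑' i : I, (μ (R (i : ℕ))).toReal :=
              ENNReal.tsum_toReal_eq (fun i => measure_ne_top μ _)
      have hsubsum : Summable fun i : I => (μ (R (i : ℕ))).toReal * |u (T i) - v (T i)| :=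
        hsummable.subtype _
      have h2 : c * ∑' i : I, (μ (R (i : ℕ))).toReal
          ≤ ∑' i : I, (μ (R (i : ℕ))).toReal * |u (T (i : ℕ)) - v (T (i : ℕ))| := by
        rw [← tsum_mul_left]
        have hμsubsum : Summable fun i : I => c * (μ (R (i : ℕ))).toReal := by
          apply Summable.mul_left
          have : Summable fun i : ℕ => (μ (R i)).toReal :=
            ENNReal.summable_toReal (by rw [← measure_iUnion hR.2.1 hR.1]; exact measure_ne_top μ _)
          exact this.subtype _
        refine Summable.tsum_le_tsum (fun i => ?_) hμsubsum hsubsum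
        rw [mul_comm]
        apply mul_le_mul_of_nonneg_left _ ENNReal.toReal_nonneg
        exact le_of_lt (hTE i i.2)
      have h3 : ∑' i : I, (μ (R (i : ℕ))).toReal * |u (T (i : ℕ)) - v (T (i : ℕ))|
          ≤ ∑' i, (μ (R i)).toReal * |u (T i) - v (T i)| :=
        Summable.tsum_subtype_le _ _ (fun i => by positivity) hsummable
      calc c * (μ E).toReal ≤ c * ∑' i : I, (μ (R (i : ℕ))).toReal :=
            mul_le_mul_of_nonneg_left h1 hc.le
        _ ≤ ∑' i : I, (μ (R (i : ℕ))).toReal * |u (T (i : ℕ)) - v (T (i : ℕ))| := h2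
        _ ≤ ∑' i, (μ (R i)).toReal * |u (T i) - v (T i)| := h3
        _ ≤ 6 * ε + ε * (μ Set.univ).toReal := hcomb
        _ = (6 + (μ Set.univ).toReal) * ε := by ring
    -- conclude μ E = 0
    have h0 : (μ E).toReal ≤ 0 := by
      by_contra hcon
      push_neg at hcon
      set K : ℝ := 6 + (μ Set.univ).toReal with hK
      have hK0 : 0 ≤ K := by
        have := ENNReal.toReal_nonneg (a := μ Set.univ)
        linarith
      set d : ℝ := c * (μ E).toReal with hd
      have hd0 : 0 < d := mul_pos hc hcon
      have hb := hEbound (d / (2 * (K + 1))) (by positivity)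
      have heq : (K + 1) * (d / (2 * (K + 1))) = d / 2 := by
        field_simp
      have : K * (d / (2 * (K + 1))) ≤ (K + 1) * (d / (2 * (K + 1))) := by
        have : 0 ≤ d / (2 * (K + 1)) := by positivity
        nlinarith
      rw [heq] at this
      linarith
    have hne_top : μ E ≠ ⊤ := measure_ne_top μ _
    have : (μ E).toReal = 0 := le_antisymm h0 ENNReal.toReal_nonneg
    exact (ENNReal.toReal_eq_zero_iff _).mp this |>.resolve_right hne_top
  have hsubset : {t | u t ≠ v t} ⊆ ⋃ n : ℕ, {t | 1 / ((n : ℝ) + 1) < |u t - v t|} := by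
    intro t ht
    have h0 : 0 < |u t - v t| := abs_pos.mpr (sub_ne_zero.mpr ht)
    obtain ⟨n, hn⟩ := exists_nat_one_div_lt h0
    exact Set.mem_iUnion.mpr ⟨n, hn⟩
  have hzero : μ {t | u t ≠ v t} = 0 := by
    refine le_antisymm ?_ (zero_le)
    calc μ {t | u t ≠ v t} ≤ μ (⋃ n : ℕ, {t | 1 / ((n : ℝ) + 1) < |u t - v t|}) :=
          measure_mono hsubset
      _ ≤ ∑' n : ℕ, μ {t | 1 / ((n : ℝ) + 1) < |u t - v t|} := measure_iUnion_le _
      _ = 0 := by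
          have : ∀ n : ℕ, μ {t | 1 / ((n : ℝ) + 1) < |u t - v t|} = 0 := by
            intro n
            exact main _ (by positivity)
          simp only [this, tsum_zero]
  rw [Filter.EventuallyEq, MeasureTheory.ae_iff]
  exact hzero

end Helpers

/-- If every RL-integrable `X`-valued function on `Ω` has a Bochner-integrable
equivalent and `X` admits a countable family of continuous linear functionals separating
points, then every RL-integrable function `f : Ω → X` is Bochner-integrable. -/
theorem bochner_integrable_of_RL_integrable
    {Ω X : Type*} [MeasurableSpace Ω] [NormedAddCommGroup X] [NormedSpace ℝ X] [CompleteSpace X]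
    (μ : Measure Ω) [IsFiniteMeasure μ]
    (hequiv : ∀ h : Ω → X, (∃ x, HasRLIntegral μ h Set.univ x) →
      ∃ g : Ω → X, BochnerEquivalent μ h g)
    (φ : ℕ → X →L[ℝ] ℝ) (hsep : ∀ x : X, (∀ n, φ n x = 0) → x = 0)
    (f : Ω → X) (hf : ∃ x, HasRLIntegral μ f Set.univ x) :
    Integrable f μ := by
  classical
  rcases isEmpty_or_nonempty Ω with hΩ | hne
  · have hf0 : f = fun _ => 0 := funext fun t => isEmptyElim t
    rw [hf0]
    exact integrable_zero _ _ _
  · obtain ⟨g, hgint, hg⟩ := hequiv f hf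
    have hae : ∀ n : ℕ, (fun ω => φ n (f ω)) =ᵐ[μ] fun ω => φ n (g ω) := by
      intro n
      set v : Ω → ℝ := fun ω => φ n (g ω) with hvdef
      have hvint : Integrable v μ := (φ n).integrable_comp hgint
      set v' : Ω → ℝ := hvint.1.mk v with hv'def
      have hv'meas : Measurable v' := hvint.1.stronglyMeasurable_mk.measurable
      have hv'ae : v =ᵐ[μ] v' := hvint.1.ae_eq_mk
      have hv'int : Integrable v' μ := hvint.congr hv'ae
      have hu : ∀ A : Set Ω, MeasurableSet A →
          HasRLIntegral μ (fun ω => φ n (f ω)) A (∫ ω in A, v' ω ∂μ) := by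
        intro A hA
        have h1 := HasRLIntegral.clm_comp (φ n) (hg A hA)
        have h2 : (φ n) (∫ ω in A, g ω ∂μ) = ∫ ω in A, v' ω ∂μ := by
          rw [← ContinuousLinearMap.integral_comp_comm (φ n) hgint.integrableOn]
          exact integral_congr_ae (ae_restrict_of_ae hv'ae)
        rwa [h2] at h1
      have h3 : (fun ω => φ n (f ω)) =ᵐ[μ] v' := scalar_ae_eq hne hv'int hv'meas hu
      exact h3.trans hv'ae.symm
    have hfg : f =ᵐ[μ] g := by
      have hall : ∀ᵐ ω ∂μ, ∀ n, φ n (f ω) = φ n (g ω) := MeasureTheory.ae_all_iff.mpr hae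
      filter_upwards [hall] with ω hω
      have hz : ∀ n, φ n (f ω - g ω) = 0 := fun n => by
        rw [map_sub, hω n, sub_self]
      exact sub_eq_zero.mp (hsep _ hz)
    exact hgint.congr hfg.symm
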